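/- Let α, β, γ be real numbers with γ not equal to zero or a negative integer, and for |x| < 1 define F(a, b, c, x) = ∑_{n=0}^∞ ((a)ₙ(b)ₙ/((c)ₙ · n!))·xⁿ, where (a)ₙ is the rising factorial a(a+1)⋯(a+n−1). Then for every x with 0 < x < 1, the function x ↦ (1/γ)·x^γ·(1−x)^(α+β−γ+1)·F(α+1, β+1, γ+1, x) is differentiable with derivative x^(γ−1)·(1−x)^(α+β−γ)·F(α, β, γ, x); equivalently, ∫ x^(γ−1)(1−x)^(α+β−γ) ₂F₁(α,β;γ;x) dx = (1/γ)·x^γ(1−x)^(α+β−γ+1) ₂F₁(α+1,β+1;γ+1;x). Here x^γ and (1−x)^(α+β−γ) denote real powers of positive reals. -/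

import Mathlib

open scoped Nat
open Filter Metric

/-- coefficient of the hypergeometric series -/
noncomputable def gcoef (a b g : ℝ) (n : ℕ) : ℝ :=
  (ascPochhammer ℝ n).eval a * (ascPochhammer ℝ n).eval b /
      ((ascPochhammer ℝ n).eval g * (n ! : ℝ))

lemma poch_succ_eval (a : ℝ) (n : ℕ) :
    (ascPochhammer ℝ (n+1)).eval a = (ascPochhammer ℝ n).eval a * (a + n) :=
  ascPochhammer_succ_eval n a

lemma poch_succ_left_eval (a : ℝ) (n : ℕ) :
    (ascPochhammer ℝ (n+1)).eval a = a * (ascPochhammer ℝ n).eval (a + 1) := by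
  rw [ascPochhammer_succ_left]
  simp [Polynomial.eval_comp]

lemma poch_ne_zero {g : ℝ} (hg : ∀ n : ℕ, g + n ≠ 0) (n : ℕ) :
    (ascPochhammer ℝ n).eval g ≠ 0 := by
  induction n with
  | zero => simp
  | succ n ih =>
      rw [poch_succ_eval]
      exact mul_ne_zero ih (hg n)

lemma gcoef_succ {a b g : ℝ} (hg : ∀ n : ℕ, g + n ≠ 0)
    (hp : ∀ n : ℕ, (ascPochhammer ℝ n).eval g ≠ 0) (n : ℕ) :
    gcoef a b g (n+1) = gcoef a b g n * ((a+n)*(b+n)/((g+n)*(n+1))) := by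
  unfold gcoef
  rw [poch_succ_eval, poch_succ_eval, poch_succ_eval, Nat.factorial_succ]
  have h1 := hp n
  have h2 := hg n
  have h3 : ((n:ℝ)+1) ≠ 0 := by positivity
  have h4 : ((n ! : ℕ) : ℝ) ≠ 0 := by exact_mod_cast Nat.factorial_ne_zero n
  push_cast
  field_simp

lemma tendsto_shift_ratio (a b : ℝ) :
    Tendsto (fun n : ℕ => ((n:ℝ)+a)/((n:ℝ)+b)) atTop (nhds 1) := by
  have h1 := tendsto_natCast_div_add_atTop (𝕜 := ℝ) a
  have h2 := tendsto_natCast_div_add_atTop (𝕜 := ℝ) b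
  have h3 : Tendsto (fun n : ℕ => ((n:ℝ)/((n:ℝ)+b)) / ((n:ℝ)/((n:ℝ)+a)))
      atTop (nhds 1) := by
    have h := h2.div h1 one_ne_zero; rw [div_one] at h; exact h
  apply h3.congr'
  filter_upwards [eventually_gt_atTop 0,
    (tendsto_natCast_atTop_atTop (R := ℝ)).eventually_gt_atTop (|a|),
    (tendsto_natCast_atTop_atTop (R := ℝ)).eventually_gt_atTop (|b|)] with n hn ha hb
  have hn0 : (n:ℝ) ≠ 0 := by positivity
  have ha0 : (n:ℝ) + a ≠ 0 := by
    have := neg_abs_le a; nlinarith [abs_nonneg a]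
  have hb0 : (n:ℝ) + b ≠ 0 := by
    have := neg_abs_le b; nlinarith [abs_nonneg b]
  field_simp

lemma summable_master (a b g : ℝ) (hg : ∀ n : ℕ, g + n ≠ 0)
    (hp : ∀ n : ℕ, (ascPochhammer ℝ n).eval g ≠ 0)
    {r : ℝ} (hr0 : 0 ≤ r) (hr1 : r < 1) :
    Summable (fun n : ℕ => |gcoef a b g n| * ((n:ℝ)+1) * r^n) := by
  set r' : ℝ := (1+r)/2 with hr'
  have hr'1 : r' < 1 := by rw [hr']; linarith
  have hrr' : r < r' := by rw [hr']; linarith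
  apply summable_of_ratio_norm_eventually_le hr'1
  have hq : Tendsto (fun n : ℕ =>
      r * (|((n:ℝ)+a)/((n:ℝ)+g)| * |((n:ℝ)+b)/((n:ℝ)+1)| * (((n:ℝ)+2)/((n:ℝ)+1))))
      atTop (nhds r) := by
    have h1 := (tendsto_shift_ratio a g).abs
    have h2 := (tendsto_shift_ratio b 1).abs
    have h3 := tendsto_shift_ratio 2 1
    have := ((h1.mul h2).mul h3).const_mul r
    simpa using this
  have hev : ∀ᶠ (n : ℕ) in atTop,
      r * (|((n:ℝ)+a)/((n:ℝ)+g)| * |((n:ℝ)+b)/((n:ℝ)+1)| * (((n:ℝ)+2)/((n:ℝ)+1))) ≤ r' :=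
    hq.eventually_le_const hrr'
  filter_upwards [hev] with n hn
  have hterm : ∀ m : ℕ, ‖|gcoef a b g m| * ((m:ℝ)+1) * r^m‖
      = |gcoef a b g m| * ((m:ℝ)+1) * r^m := by
    intro m
    apply Real.norm_of_nonneg
    positivity
  rw [hterm, hterm]
  have hg0 : ((n:ℝ) + g) ≠ 0 := by have := hg n; intro h; exact this (by linarith)
  have hn1 : ((n:ℝ) + 1) ≠ 0 := by positivity
  have habs : |gcoef a b g (n+1)| =
      |gcoef a b g n| * (|(a:ℝ)+n| * |(b:ℝ)+n| / (|(g:ℝ)+n| * ((n:ℝ)+1))) := by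
    rw [gcoef_succ hg hp n, abs_mul, abs_div, abs_mul, abs_mul]
    rw [abs_of_pos (by positivity : (0:ℝ) < (n:ℝ)+1)]
  rw [habs]
  push_cast
  have key : |(a:ℝ)+(n:ℝ)| * |(b:ℝ)+(n:ℝ)| / (|(g:ℝ)+(n:ℝ)| * ((n:ℝ)+1)) * ((n:ℝ)+2) * r ≤
      r' * ((n:ℝ)+1) := by
    have hge : (0:ℝ) < |(g:ℝ)+(n:ℝ)| := by
      rw [abs_pos]; intro h; exact hg0 (by linarith)
    have hne : r * (|((n:ℝ)+a)/((n:ℝ)+g)| * |((n:ℝ)+b)/((n:ℝ)+1)| * (((n:ℝ)+2)/((n:ℝ)+1)))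
        = |(a:ℝ)+(n:ℝ)| * |(b:ℝ)+(n:ℝ)| / (|(g:ℝ)+(n:ℝ)| * ((n:ℝ)+1)) * ((n:ℝ)+2) * r
          / ((n:ℝ)+1) := by
      rw [abs_div, abs_div, abs_of_pos (by positivity : (0:ℝ) < (n:ℝ)+1)]
      rw [show |(n:ℝ)+a| = |(a:ℝ)+(n:ℝ)| by rw [add_comm],
          show |(n:ℝ)+b| = |(b:ℝ)+(n:ℝ)| by rw [add_comm],
          show |(n:ℝ)+g| = |(g:ℝ)+(n:ℝ)| by rw [add_comm]]
      field_simp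
    rw [hne] at hn
    have hn1' : (0:ℝ) < (n:ℝ)+1 := by positivity
    calc |(a:ℝ)+(n:ℝ)| * |(b:ℝ)+(n:ℝ)| / (|(g:ℝ)+(n:ℝ)| * ((n:ℝ)+1)) * ((n:ℝ)+2) * r
        = (|(a:ℝ)+(n:ℝ)| * |(b:ℝ)+(n:ℝ)| / (|(g:ℝ)+(n:ℝ)| * ((n:ℝ)+1)) * ((n:ℝ)+2) * r
            / ((n:ℝ)+1)) * ((n:ℝ)+1) := by field_simp
      _ ≤ r' * ((n:ℝ)+1) := by
          apply mul_le_mul_of_nonneg_right hn (le_of_lt hn1')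
  calc |gcoef a b g n| * (|(a:ℝ)+n| * |(b:ℝ)+n| / (|(g:ℝ)+n| * ((n:ℝ)+1))) * ((n:ℝ)+1+1) * r^(n+1)
      = (|(a:ℝ)+(n:ℝ)| * |(b:ℝ)+(n:ℝ)| / (|(g:ℝ)+(n:ℝ)| * ((n:ℝ)+1)) * ((n:ℝ)+2) * r)
        * (|gcoef a b g n| * r^n) := by ring
    _ ≤ (r' * ((n:ℝ)+1)) * (|gcoef a b g n| * r^n) := by
        apply mul_le_mul_of_nonneg_right key (by positivity)
    _ = r' * (|gcoef a b g n| * ((n:ℝ)+1) * r^n) := by ring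

lemma gcoef_key {a b g : ℝ} (hg0 : g ≠ 0) (hg : ∀ n : ℕ, g + n ≠ 0)
    (hp1 : ∀ n : ℕ, (ascPochhammer ℝ n).eval (g+1) ≠ 0) (n : ℕ) :
    (g + ((n:ℝ)+1)) * gcoef (a+1) (b+1) (g+1) (n+1)
      = g * gcoef a b g (n+1) + (a+b+((n:ℝ)+1)) * gcoef (a+1) (b+1) (g+1) n := by
  unfold gcoef
  rw [poch_succ_eval (a+1), poch_succ_eval (b+1), poch_succ_eval (g+1),
      poch_succ_left_eval a, poch_succ_left_eval b, poch_succ_left_eval g,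
      Nat.factorial_succ]
  have h1 := hp1 n
  have h2 : g + 1 + (n:ℝ) ≠ 0 := by
    have := hg (n+1); push_cast at this; intro h; exact this (by linarith)
  have h3 : ((n:ℝ)+1) ≠ 0 := by positivity
  have h4 : ((n ! : ℕ) : ℝ) ≠ 0 := by exact_mod_cast Nat.factorial_ne_zero n
  push_cast
  field_simp
  ring

/-- The Gauss hypergeometric function `₂F₁(a, b; c; x)`, defined by its power series
with rising-factorial (Pochhammer) coefficients. -/
noncomputable def gaussF (a b c x : ℝ) : ℝ :=
  ∑' n : ℕ,
    ((ascPochhammer ℝ n).eval a * (ascPochhammer ℝ n).eval b /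
      ((ascPochhammer ℝ n).eval c * (n ! : ℝ))) * x ^ n

lemma gaussF_eq (a b g x : ℝ) : gaussF a b g x = ∑' n : ℕ, gcoef a b g n * x ^ n := rfl

set_option maxHeartbeats 2000000 in
/-- Indefinite integral of the Gauss hypergeometric function: if `γ` is not zero
or a negative integer, then for `0 < x < 1`
`((1/γ)·x^γ·(1−x)^(α+β−γ+1)·₂F₁(α+1,β+1;γ+1;x))'
  = x^(γ−1)·(1−x)^(α+β−γ)·₂F₁(α,β;γ;x)`, where powers are real powers. -/
theorem stmt_14 (α β γ : ℝ) (hγ : ∀ n : ℕ, γ ≠ -(n : ℝ)) :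
    ∀ x : ℝ, 0 < x → x < 1 →
      HasDerivAt
        (fun t => (1 / γ) * t ^ γ * (1 - t) ^ (α + β - γ + 1) *
          gaussF (α + 1) (β + 1) (γ + 1) t)
        (x ^ (γ - 1) * (1 - x) ^ (α + β - γ) * gaussF α β γ x) x := by
  intro x hx0 hx1
  have hγ0 : γ ≠ 0 := by have := hγ 0; simpa using this
  have hγn : ∀ n : ℕ, γ + (n:ℝ) ≠ 0 := by
    intro n h; exact hγ n (by linarith)
  have hγ1n : ∀ n : ℕ, (γ+1) + (n:ℝ) ≠ 0 := by
    intro n h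
    exact hγ (n+1) (by push_cast; linarith)
  have hp : ∀ n, (ascPochhammer ℝ n).eval γ ≠ 0 := poch_ne_zero hγn
  have hp1 : ∀ n, (ascPochhammer ℝ n).eval (γ+1) ≠ 0 := poch_ne_zero hγ1n
  set r : ℝ := (x+1)/2 with hrdef
  have hr0 : 0 < r := by rw [hrdef]; linarith
  have hxr : x < r := by rw [hrdef]; linarith
  have hr1 : r < 1 := by rw [hrdef]; linarith
  have habsx : |x| < r := by rw [abs_of_pos hx0]; exact hxr
  have hum : Summable (fun n : ℕ => |gcoef (α+1) (β+1) (γ+1) n| * ((n:ℝ)+1) * r^n) :=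
    summable_master _ _ _ hγ1n hp1 hr0.le hr1
  have hum2 : Summable (fun n : ℕ => |gcoef α β γ n| * ((n:ℝ)+1) * r^n) :=
    summable_master _ _ _ hγn hp hr0.le hr1
  -- summability of the two series at x
  have hbound : ∀ (c : ℕ → ℝ) (n : ℕ), ‖c n * x ^ n‖ ≤ |c n| * ((n:ℝ)+1) * r^n := by
    intro c n
    rw [norm_mul, norm_pow, Real.norm_eq_abs, Real.norm_eq_abs]
    have h1 : |x|^n ≤ r^n := pow_le_pow_left₀ (abs_nonneg x) habsx.le n
    calc |c n| * |x|^n ≤ |c n| * r^n := mul_le_mul_of_nonneg_left h1 (abs_nonneg _)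
      _ ≤ |c n| * ((n:ℝ)+1) * r^n := by
          nlinarith [mul_nonneg (abs_nonneg (c n)) (pow_nonneg hr0.le n),
            Nat.cast_nonneg (α := ℝ) n]
  have hsum_c' : Summable (fun n : ℕ => gcoef (α+1) (β+1) (γ+1) n * x ^ n) :=
    Summable.of_norm_bounded hum (hbound _)
  have hsum_c : Summable (fun n : ℕ => gcoef α β γ n * x ^ n) :=
    Summable.of_norm_bounded hum2 (hbound _)
  -- derivative of the series
  have hball : x ∈ ball (0:ℝ) r := by
    rw [mem_ball, dist_zero_right, Real.norm_eq_abs]; exact habsx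
  have hderiv_bound : ∀ (n : ℕ), ∀ y ∈ ball (0:ℝ) r,
      ‖gcoef (α+1) (β+1) (γ+1) n * ((n:ℝ) * y ^ (n-1))‖
        ≤ (1/r) * (|gcoef (α+1) (β+1) (γ+1) n| * ((n:ℝ)+1) * r^n) := by
    intro n y hy
    rw [mem_ball, dist_zero_right, Real.norm_eq_abs] at hy
    rw [norm_mul, norm_mul, norm_pow, Real.norm_eq_abs, Real.norm_eq_abs, Real.norm_eq_abs]
    cases n with
    | zero => simp; positivity
    | succ m =>
        have h1 : |y|^(m+1-1) ≤ r^m := by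
          simpa using pow_le_pow_left₀ (abs_nonneg y) hy.le m
        have hm : |((m:ℕ)+1 : ℝ)| = (m:ℝ)+1 := abs_of_pos (by positivity)
        have hrw : (1/r) * (|gcoef (α+1) (β+1) (γ+1) (m+1)| * (((m+1:ℕ):ℝ)+1) * r^(m+1))
            = |gcoef (α+1) (β+1) (γ+1) (m+1)| * (((m:ℝ)+2) * r^m) := by
          push_cast
          rw [pow_succ]
          field_simp
          ring
        rw [hrw]
        push_cast
        rw [hm]
        have h2 : ((m:ℝ)+1) * |y|^(m+1-1) ≤ ((m:ℝ)+2) * r^m := by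
          have : ((m:ℝ)+1) * |y|^(m+1-1) ≤ ((m:ℝ)+1) * r^m :=
            mul_le_mul_of_nonneg_left h1 (by positivity)
          nlinarith [pow_nonneg hr0.le m]
        calc |gcoef (α+1) (β+1) (γ+1) (m+1)| * (((m:ℝ)+1) * |y|^(m+1-1))
            ≤ |gcoef (α+1) (β+1) (γ+1) (m+1)| * (((m:ℝ)+2) * r^m) :=
              mul_le_mul_of_nonneg_left h2 (abs_nonneg _)
          _ = _ := rfl
  have hg' : HasDerivAt (fun z : ℝ => ∑' n : ℕ, gcoef (α+1) (β+1) (γ+1) n * z ^ n)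
      (∑' n : ℕ, gcoef (α+1) (β+1) (γ+1) n * ((n:ℝ) * x ^ (n-1))) x := by
    apply hasDerivAt_tsum_of_isPreconnected (hum.mul_left (1/r)) isOpen_ball
      (convex_ball (0:ℝ) r).isPreconnected ?_ hderiv_bound hball hsum_c' hball
    intro n y _
    exact (hasDerivAt_pow n y).const_mul (gcoef (α+1) (β+1) (γ+1) n)
  have hsum_d : Summable (fun n : ℕ => gcoef (α+1) (β+1) (γ+1) n * ((n:ℝ) * x ^ (n-1))) :=
    Summable.of_norm_bounded (hum.mul_left (1/r)) (fun n => hderiv_bound n x hball)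
  set G : ℝ := gaussF (α+1) (β+1) (γ+1) x with hGdef
  set F : ℝ := gaussF α β γ x with hFdef
  set G' : ℝ := ∑' n : ℕ, gcoef (α+1) (β+1) (γ+1) n * ((n:ℝ) * x ^ (n-1)) with hG'def
  have hSG : HasSum (fun n : ℕ => gcoef (α+1) (β+1) (γ+1) n * x ^ n) G := by
    rw [hGdef, gaussF_eq]; exact hsum_c'.hasSum
  have hSF : HasSum (fun n : ℕ => gcoef α β γ n * x ^ n) F := by
    rw [hFdef, gaussF_eq]; exact hsum_c.hasSum
  have hSG' : HasSum (fun n : ℕ => gcoef (α+1) (β+1) (γ+1) n * ((n:ℝ) * x ^ (n-1))) G' :=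
    hsum_d.hasSum
  -- the pow helper
  have hxpow : ∀ n : ℕ, x * ((n:ℝ) * x ^ (n-1)) = (n:ℝ) * x ^ n := by
    intro n
    cases n with
    | zero => simp
    | succ m =>
        have : m + 1 - 1 = m := rfl
        rw [this]
        push_cast
        rw [pow_succ]
        ring
  -- the telescoping sequence
  set v : ℕ → ℝ := fun n => (γ + (n:ℝ)) * (gcoef (α+1) (β+1) (γ+1) n * x^n)
      - γ * (gcoef α β γ n * x^n) with hvdef
  have hsum_n : Summable (fun n : ℕ => (n:ℝ) * (gcoef (α+1) (β+1) (γ+1) n * x^n)) := by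
    apply (hsum_d.mul_left x).congr
    intro n
    calc x * (gcoef (α+1) (β+1) (γ+1) n * ((n:ℝ) * x ^ (n-1)))
        = gcoef (α+1) (β+1) (γ+1) n * (x * ((n:ℝ) * x ^ (n-1))) := by ring
      _ = gcoef (α+1) (β+1) (γ+1) n * ((n:ℝ) * x ^ n) := by rw [hxpow n]
      _ = (n:ℝ) * (gcoef (α+1) (β+1) (γ+1) n * x ^ n) := by ring
  have hsumv : Summable v := by
    apply Summable.sub
    · apply ((hsum_c'.mul_left γ).add hsum_n).congr
      intro n; ring
    · exact hsum_c.mul_left γ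
  have hv0 : v 0 = 0 := by
    simp [hvdef, gcoef]
  have hvtel : HasSum (fun n : ℕ => v n - v (n+1)) 0 := by
    have hs : Summable (fun n : ℕ => v n - v (n+1)) :=
      hsumv.sub ((summable_nat_add_iff 1).mpr hsumv)
    rw [hs.hasSum_iff_tendsto_nat]
    have ht : Tendsto (fun N : ℕ => v 0 - v N) atTop (nhds 0) := by
      have := hsumv.tendsto_atTop_zero.const_sub (v 0)
      simpa [hv0] using this
    exact ht.congr (fun N => (Finset.sum_range_sub' v N).symm)
  -- the combined sum
  have hT : HasSum (fun n : ℕ => (γ*(1-x)) * (gcoef (α+1) (β+1) (γ+1) n * x^n)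
        - ((α+β-γ+1)*x) * (gcoef (α+1) (β+1) (γ+1) n * x^n)
        + (x*(1-x)) * (gcoef (α+1) (β+1) (γ+1) n * ((n:ℝ) * x ^ (n-1))))
      ((γ*(1-x)) * G - ((α+β-γ+1)*x) * G + (x*(1-x)) * G') :=
    ((hSG.mul_left _).sub (hSG.mul_left _)).add (hSG'.mul_left _)
  have hT2 : HasSum (fun n : ℕ => γ * (gcoef α β γ n * x^n) + (v n - v (n+1)))
      (γ * F + 0) := (hSF.mul_left γ).add hvtel
  have hfun : ∀ n : ℕ, (γ*(1-x)) * (gcoef (α+1) (β+1) (γ+1) n * x^n)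
        - ((α+β-γ+1)*x) * (gcoef (α+1) (β+1) (γ+1) n * x^n)
        + (x*(1-x)) * (gcoef (α+1) (β+1) (γ+1) n * ((n:ℝ) * x ^ (n-1)))
      = γ * (gcoef α β γ n * x^n) + (v n - v (n+1)) := by
    intro n
    have hk := gcoef_key (a := α) (b := β) hγ0 hγn hp1 n
    have hx2 := hxpow n
    simp only [hvdef]
    push_cast
    linear_combination (x^(n+1)) * hk + ((1-x) * gcoef (α+1) (β+1) (γ+1) n) * hx2
  have heq : (fun n : ℕ => γ * (gcoef α β γ n * x^n) + (v n - v (n+1)))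
      = (fun n : ℕ => (γ*(1-x)) * (gcoef (α+1) (β+1) (γ+1) n * x^n)
        - ((α+β-γ+1)*x) * (gcoef (α+1) (β+1) (γ+1) n * x^n)
        + (x*(1-x)) * (gcoef (α+1) (β+1) (γ+1) n * ((n:ℝ) * x ^ (n-1)))) :=
    funext fun n => (hfun n).symm
  rw [heq] at hT2
  have hkey : (γ*(1-x)) * G - ((α+β-γ+1)*x) * G + (x*(1-x)) * G' = γ * F := by
    have := hT.unique hT2
    linarith [this]
  -- final assembly via product rule
  have h1x : (0:ℝ) < 1 - x := by linarith
  have hA : HasDerivAt (fun t : ℝ => t ^ γ) (γ * x^(γ-1)) x :=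
    Real.hasDerivAt_rpow_const (Or.inl hx0.ne')
  have hBinner : HasDerivAt (fun t : ℝ => 1 - t) (-1) x := by
    simpa using (hasDerivAt_id x).const_sub 1
  have hB : HasDerivAt (fun t : ℝ => (1-t) ^ (α+β-γ+1))
      (-((α+β-γ+1) * (1-x)^(α+β-γ))) x := by
    have h := (Real.hasDerivAt_rpow_const (x := 1-x) (p := α+β-γ+1)
      (Or.inl h1x.ne')).comp x hBinner
    refine h.congr_deriv ?_
    rw [show α+β-γ+1-1 = α+β-γ by ring]
    ring
  have hC : HasDerivAt (fun t => gaussF (α+1) (β+1) (γ+1) t) G' x := hg'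
  have hD := ((hA.const_mul (1/γ)).mul hB).mul hC
  refine hD.congr_deriv (Eq.symm ?_)
  simp only [Pi.mul_apply]
  -- value identity
  have hxg : x ^ γ = x^(γ-1) * x := by
    rw [show γ = (γ-1)+1 by ring, Real.rpow_add hx0, Real.rpow_one]
    ring_nf
  have h2y : (1-x)^(α+β-γ+1) = (1-x)^(α+β-γ) * (1-x) := by
    rw [Real.rpow_add h1x, Real.rpow_one]
  rw [hxg, h2y, ← hGdef]
  field_simp
  linear_combination (-1) * hkey
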